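/- For n ≥ 3 and g = 1: suppose F₁, F₂ are distinct 1-good-neighbor faulty sets of HCN_n each of size at most 2n+1, and suppose for every pair of adjacent vertices u, w outside F₁ ∪ F₂ and every v ∈ F₁ Δ F₂, vw is not an edge; for every w outside F₁ ∪ F₂, w does not have two neighbors in F₁ \ F₂; and w does not have two neighbors in F₂ \ F₁. Then the subgraph of HCN_n induced on V \ (F₁ ∪ F₂) has no isolated vertex. -/

import Mathlib

/-- Vertices of the hierarchical cubic network: pairs (cluster label, position). -/
abbrev HVert (n : ℕ) := (Fin n → Bool) × (Fin n → Bool)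

/-- The hierarchical cubic network HCN_n. Within a cluster (same first coordinate),
two vertices are adjacent iff their second coordinates differ in exactly one bit.
Crossing edges: (x,y) with x ≠ y is adjacent to (y,x); (x,x) is adjacent to (x̄,x̄). -/
def HCN (n : ℕ) : SimpleGraph (HVert n) :=
  SimpleGraph.fromRel (fun u v =>
    (u.1 = v.1 ∧ (Finset.univ.filter (fun i => u.2 i ≠ v.2 i)).card = 1) ∨
    (u.1 ≠ u.2 ∧ v = (u.2, u.1)) ∨
    (u.1 = u.2 ∧ v = (fun i => !u.1 i, fun i => !u.2 i)))

/-- `u` and `v` are joined by a crossing edge of HCN_n. -/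
def IsCrossing (n : ℕ) (u v : HVert n) : Prop :=
  ((u.1 ≠ u.2 ∧ v = (u.2, u.1)) ∨ (u.1 = u.2 ∧ v = (fun i => !u.1 i, fun i => !u.2 i))) ∨
  ((v.1 ≠ v.2 ∧ u = (v.2, v.1)) ∨ (v.1 = v.2 ∧ u = (fun i => !v.1 i, fun i => !v.2 i)))

/-- `F` is a g-good-neighbor faulty set of HCN_n: every vertex outside `F`
has at least `g` neighbors outside `F`. -/
def GoodNbrSet (n g : ℕ) (F : Set (HVert n)) : Prop :=
  ∀ v ∉ F, g ≤ (((HCN n).neighborSet v) \ F).ncard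


def Qadj {m : ℕ} (y z : Fin m → Bool) : Prop :=
  (Finset.univ.filter (fun i => y i ≠ z i)).card = 1

def Rr {m : ℕ} (S : Set (Fin m → Bool)) (a b : Fin m → Bool) : Prop :=
  Qadj a b ∧ a ∉ S ∧ b ∉ S

def cns {m : ℕ} (b : Bool) (u : Fin m → Bool) : Fin (m+1) → Bool := Fin.cons b u

@[simp] lemma cns_zero {m : ℕ} (b : Bool) (u : Fin m → Bool) : cns b u 0 = b := rfl

@[simp] lemma cns_succ {m : ℕ} (b : Bool) (u : Fin m → Bool) (i : Fin m) :
    cns b u i.succ = u i := by simp [cns]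

lemma cns_self_tail {m : ℕ} (f : Fin (m+1) → Bool) : cns (f 0) (Fin.tail f) = f :=
  Fin.cons_self_tail f

lemma cns_inj {m : ℕ} {b : Bool} {u u' : Fin m → Bool} (h : cns b u = cns b u') : u = u' := by
  funext i
  have := congrFun h i.succ
  simpa using this

lemma qadj_cns_card {m : ℕ} (b b' : Bool) (u u' : Fin m → Bool) :
    (Finset.univ.filter (fun i => cns b u i ≠ cns b' u' i)).card
      = (if b = b' then 0 else 1) + (Finset.univ.filter (fun i => u i ≠ u' i)).card := by
  rw [Fin.card_filter_univ_succ' (fun i => cns b u i ≠ cns b' u' i)]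
  simp only [cns_zero, cns_succ]
  by_cases h : b = b' <;> simp [h]

lemma qadj_cns_same {m : ℕ} (b : Bool) {u u' : Fin m → Bool} (h : Qadj u u') :
    Qadj (cns b u) (cns b u') := by
  unfold Qadj at *
  rw [qadj_cns_card, if_pos rfl, h]

lemma qadj_cns_head {m : ℕ} {b b' : Bool} (h : b ≠ b') (u : Fin m → Bool) :
    Qadj (cns b u) (cns b' u) := by
  unfold Qadj
  rw [qadj_cns_card, if_neg h]
  simp

lemma lift_reach {m : ℕ} (S : Set (Fin (m+1) → Bool)) (b : Bool) {u u' : Fin m → Bool}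
    (h : Relation.ReflTransGen (Rr {g | cns b g ∈ S}) u u') :
    Relation.ReflTransGen (Rr S) (cns b u) (cns b u') := by
  induction h with
  | refl => exact Relation.ReflTransGen.refl
  | tail _ hstep ih =>
      exact ih.tail ⟨qadj_cns_same b hstep.1, hstep.2.1, hstep.2.2⟩

lemma qconn {m : ℕ} (S : Set (Fin m → Bool)) (hS : S = ∅) :
    ∀ p q : Fin m → Bool, Relation.ReflTransGen (Rr S) p q := by
  subst hS
  induction m with
  | zero =>
      intro p q
      have : p = q := funext fun i => i.elim0
      rw [this]
  | succ m IH =>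
      intro p q
      have h1 : Relation.ReflTransGen (Rr (∅ : Set (Fin (m+1) → Bool)))
          (cns (p 0) (Fin.tail p)) (cns (p 0) (Fin.tail q)) := by
        apply lift_reach (∅ : Set (Fin (m+1) → Bool)) (p 0)
        have hset : ({g | cns (p 0) g ∈ (∅ : Set (Fin (m+1) → Bool))} : Set (Fin m → Bool)) = ∅ := by
          ext g; simp
        rw [hset]
        exact IH (Fin.tail p) (Fin.tail q)
      have h2 : Relation.ReflTransGen (Rr (∅ : Set (Fin (m+1) → Bool)))
          (cns (p 0) (Fin.tail q)) (cns (q 0) (Fin.tail q)) := by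
        by_cases hb : p 0 = q 0
        · rw [hb]
        · exact Relation.ReflTransGen.single ⟨qadj_cns_head hb _, by simp, by simp⟩
      have := (h1.trans h2)
      rwa [cns_self_tail, cns_self_tail] at this

lemma qadj_symm' {m : ℕ} {y z : Fin m → Bool} (h : Qadj y z) : Qadj z y := by
  unfold Qadj at *
  rw [show (Finset.univ.filter (fun i => z i ≠ y i)) =
      (Finset.univ.filter (fun i => y i ≠ z i)) from
    Finset.filter_congr (by intro i _; simp [ne_comm])]
  exact h

lemma reach_symm {m : ℕ} (S : Set (Fin m → Bool)) {p q : Fin m → Bool}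
    (h : Relation.ReflTransGen (Rr S) p q) : Relation.ReflTransGen (Rr S) q p := by
  induction h with
  | refl => exact Relation.ReflTransGen.refl
  | tail _ hstep ih =>
      exact Relation.ReflTransGen.trans
        (Relation.ReflTransGen.single ⟨qadj_symm' hstep.1, hstep.2.2, hstep.2.1⟩) ih

theorem qreach : ∀ (m : ℕ) (S : Set (Fin m → Bool)), S.ncard < m →
    ∀ p, p ∉ S → ∀ q, q ∉ S → Relation.ReflTransGen (Rr S) p q := by
  intro m
  induction m with
  | zero => intro S hS; omega
  | succ m IH =>
      intro S hS p hp q hq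
      set S0 : Set (Fin m → Bool) := {g | cns false g ∈ S} with hS0def
      set S1 : Set (Fin m → Bool) := {g | cns true g ∈ S} with hS1def
      -- S is the disjoint union of the images of S0 and S1
      have hSunion : S = (fun g => cns false g) '' S0 ∪ (fun g => cns true g) '' S1 := by
        ext f
        constructor
        · intro hf
          rcases Bool.eq_false_or_eq_true (f 0) with h0 | h0
          · right
            refine ⟨Fin.tail f, ?_, ?_⟩
            · show cns true (Fin.tail f) ∈ S
              rw [← h0, cns_self_tail]
              exact hf
            · show cns true (Fin.tail f) = f
              rw [← h0, cns_self_tail]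
          · left
            refine ⟨Fin.tail f, ?_, ?_⟩
            · show cns false (Fin.tail f) ∈ S
              rw [← h0, cns_self_tail]
              exact hf
            · show cns false (Fin.tail f) = f
              rw [← h0, cns_self_tail]
        · rintro (⟨g, hg, rfl⟩ | ⟨g, hg, rfl⟩)
          · exact hg
          · exact hg
      have hcard : S0.ncard + S1.ncard = S.ncard := by
        rw [hSunion, Set.ncard_union_eq ?_ (Set.toFinite _) (Set.toFinite _),
          Set.ncard_image_of_injective _ (fun a b h => cns_inj h),
          Set.ncard_image_of_injective _ (fun a b h => cns_inj h)]
        · rw [Set.disjoint_left]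
          rintro f ⟨g, _, rfl⟩ ⟨g', _, hg'⟩
          have := congrFun hg' 0
          simp at this
      -- helper : descend to a given level when that level's fault set is empty
      have hdesc : ∀ (b : Bool), {g | cns b g ∈ S} = ∅ → ∀ f, f ∉ S →
          Relation.ReflTransGen (Rr S) f (cns b (Fin.tail f)) := by
        intro b hb f hf
        have hclean : cns b (Fin.tail f) ∉ S := by
          intro hmem
          have : Fin.tail f ∈ ({g | cns b g ∈ S} : Set (Fin m → Bool)) := hmem
          rw [hb] at this
          exact this
        by_cases h0 : f 0 = b
        · rw [← h0, cns_self_tail]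
        · refine Relation.ReflTransGen.single ?_
          refine ⟨?_, hf, hclean⟩
          have : f = cns (f 0) (Fin.tail f) := (cns_self_tail f).symm
          rw [this]
          exact qadj_cns_head h0 _
      by_cases h0 : S0 = ∅
      · -- bottom half clean
        have hp' := hdesc false h0 p hp
        have hq' := hdesc false h0 q hq
        have hmid : Relation.ReflTransGen (Rr S) (cns false (Fin.tail p)) (cns false (Fin.tail q)) := by
          apply lift_reach
          apply qconn _ h0
        exact (hp'.trans hmid).trans (reach_symm _ hq')
      · by_cases h1 : S1 = ∅
        · have hp' := hdesc true h1 p hp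
          have hq' := hdesc true h1 q hq
          have hmid : Relation.ReflTransGen (Rr S) (cns true (Fin.tail p)) (cns true (Fin.tail q)) := by
            apply lift_reach
            apply qconn _ h1
          exact (hp'.trans hmid).trans (reach_symm _ hq')
        · -- both halves have faults
          have hpos0 : 1 ≤ S0.ncard := by
            rw [Nat.one_le_iff_ne_zero]
            intro h; exact h0 ((Set.ncard_eq_zero (Set.toFinite _)).1 h)
          have hpos1 : 1 ≤ S1.ncard := by
            rw [Nat.one_le_iff_ne_zero]
            intro h; exact h1 ((Set.ncard_eq_zero (Set.toFinite _)).1 h)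
          have hlt0 : S0.ncard < m := by omega
          have hlt1 : S1.ncard < m := by omega
          -- find a clean column
          have hcol : ∃ g : Fin m → Bool, g ∉ S0 ∧ g ∉ S1 := by
            by_contra hcon
            push_neg at hcon
            have huniv : (Set.univ : Set (Fin m → Bool)) ⊆ S0 ∪ S1 := by
              intro g _
              by_cases hg : g ∈ S0
              · exact Or.inl hg
              · exact Or.inr (hcon g hg)
            have h2m : (Set.univ : Set (Fin m → Bool)).ncard = 2 ^ m := by
              rw [Set.ncard_univ, Nat.card_eq_fintype_card]
              simp [Fintype.card_fun]
            have hle : (Set.univ : Set (Fin m → Bool)).ncard ≤ S0.ncard + S1.ncard :=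
              (Set.ncard_le_ncard huniv (Set.toFinite _)).trans (Set.ncard_union_le _ _)
            have : 2 ^ m ≤ m := by omega
            have := Nat.lt_two_pow_self (n := m)
            omega
          obtain ⟨g, hg0, hg1⟩ := hcol
          -- generic half-level fact
          have hSb : ∀ b : Bool, ({g | cns b g ∈ S} : Set (Fin m → Bool)).ncard < m := by
            intro b; cases b
            · exact hlt0
            · exact hlt1
          have hgb : ∀ b : Bool, g ∉ ({g | cns b g ∈ S} : Set (Fin m → Bool)) := by
            intro b; cases b
            · exact hg0
            · exact hg1
          have htail : ∀ f, f ∉ S → Fin.tail f ∉ ({g | cns (f 0) g ∈ S} : Set (Fin m → Bool)) := by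
            intro f hf hmem
            have : cns (f 0) (Fin.tail f) ∈ S := hmem
            rw [cns_self_tail] at this
            exact hf this
          have hp1 : Relation.ReflTransGen (Rr S) p (cns (p 0) g) := by
            have := IH _ (hSb (p 0)) _ (htail p hp) _ (hgb (p 0))
            have hl := lift_reach S (p 0) this
            rwa [cns_self_tail] at hl
          have hq1 : Relation.ReflTransGen (Rr S) (cns (q 0) g) q := by
            have := IH _ (hSb (q 0)) _ (hgb (q 0)) _ (htail q hq)
            have hl := lift_reach S (q 0) this
            rwa [cns_self_tail] at hl
          have hmid : Relation.ReflTransGen (Rr S) (cns (p 0) g) (cns (q 0) g) := by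
            by_cases hb : p 0 = q 0
            · rw [hb]
            · refine Relation.ReflTransGen.single ⟨qadj_cns_head hb _, ?_, ?_⟩
              · intro hmem; exact hgb (p 0) hmem
              · intro hmem; exact hgb (q 0) hmem
          exact (hp1.trans hmid).trans hq1



namespace HCNaux

variable {n : ℕ}

def flipb (i : Fin n) (y : Fin n → Bool) : Fin n → Bool := Function.update y i (!y i)

def cross (p : HVert n) : HVert n :=
  if p.1 = p.2 then (fun i => !p.1 i, fun i => !p.2 i) else (p.2, p.1)

lemma flipb_apply_same (i : Fin n) (y : Fin n → Bool) : flipb i y i = !y i := by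
  simp [flipb]

lemma flipb_apply_ne {i j : Fin n} (h : j ≠ i) (y : Fin n → Bool) : flipb i y j = y j := by
  simp [flipb, Function.update_of_ne h]

lemma flipb_ne (i : Fin n) (y : Fin n → Bool) : flipb i y ≠ y := by
  intro h
  have := congrFun h i
  simp [flipb_apply_same] at this

lemma eq_of_apply_ne_flipb {i j : Fin n} {y z : Fin n → Bool} (h : z = flipb i y)
    (hj : z j ≠ y j) : j = i := by
  by_contra hne
  rw [h, flipb_apply_ne hne] at hj
  exact hj rfl

lemma flipb_inj_idx {i j : Fin n} {y : Fin n → Bool} (h : flipb i y = flipb j y) : i = j := by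
  by_contra hne
  have := congrFun h i
  rw [flipb_apply_same, flipb_apply_ne hne] at this
  simp at this

lemma flipb_flipb (i : Fin n) (y : Fin n → Bool) : flipb i (flipb i y) = y := by
  funext j
  by_cases hj : j = i
  · subst hj; simp [flipb]
  · rw [flipb_apply_ne hj, flipb_apply_ne hj]

lemma qadj_iff {y z : Fin n → Bool} : Qadj y z ↔ ∃ i, z = flipb i y := by
  constructor
  · intro h
    obtain ⟨i, hi⟩ := Finset.card_eq_one.1 h
    refine ⟨i, funext fun j => ?_⟩
    by_cases hj : j = i
    · subst hj
      have : y j ≠ z j := by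
        have := Finset.mem_filter.1 (hi ▸ Finset.mem_singleton_self j : j ∈ _)
        exact this.2
      rw [flipb_apply_same]
      cases hy : y j <;> cases hz : z j <;> simp_all
    · have : j ∉ Finset.univ.filter (fun i => y i ≠ z i) := by
        rw [hi]; simpa using hj
      simp only [Finset.mem_filter, Finset.mem_univ, true_and, not_not] at this
      rw [flipb_apply_ne hj, this]
  · rintro ⟨i, rfl⟩
    have : Finset.univ.filter (fun j => y j ≠ flipb i y j) = {i} := by
      ext j
      simp only [Finset.mem_filter, Finset.mem_univ, true_and, Finset.mem_singleton]
      constructor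
      · intro hj
        by_contra hne
        rw [flipb_apply_ne hne] at hj
        exact hj rfl
      · rintro rfl
        rw [flipb_apply_same]
        cases y j <;> simp
    rw [Qadj, this, Finset.card_singleton]

lemma qadj_symm {y z : Fin n → Bool} (h : Qadj y z) : Qadj z y := by
  unfold Qadj at *
  rw [show (Finset.univ.filter (fun i => z i ≠ y i)) =
      (Finset.univ.filter (fun i => y i ≠ z i)) from Finset.filter_congr (by intro i _; simp [ne_comm])]
  exact h

lemma qadj_ne {y z : Fin n → Bool} (h : Qadj y z) : y ≠ z := by
  obtain ⟨i, rfl⟩ := qadj_iff.1 h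
  exact (flipb_ne i y).symm

lemma crossRel_iff (u v : HVert n) :
    ((u.1 ≠ u.2 ∧ v = (u.2, u.1)) ∨ (u.1 = u.2 ∧ v = (fun i => !u.1 i, fun i => !u.2 i))) ↔
      v = cross u := by
  unfold cross
  by_cases h : u.1 = u.2 <;> simp [h]

lemma cross_cross (p : HVert n) : cross (cross p) = p := by
  unfold cross
  by_cases h : p.1 = p.2
  · have h2 : (fun i => !p.1 i) = (fun i => !p.2 i) := by rw [h]
    simp only [if_pos h, if_pos h2]
    exact Prod.ext (funext fun i => Bool.not_not _) (funext fun i => Bool.not_not _)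
  · have h2 : ¬ (p.2 = p.1) := fun hh => h hh.symm
    simp [if_neg h, if_neg h2]

lemma cross_fst_ne (hn : 0 < n) (p : HVert n) : (cross p).1 ≠ p.1 := by
  unfold cross
  by_cases h : p.1 = p.2
  · simp only [if_pos h]
    intro hc
    have := congrFun hc ⟨0, hn⟩
    revert this
    cases p.1 ⟨0, hn⟩ <;> simp
  · simp only [if_neg h]
    exact fun hc => h hc.symm

lemma cross_ne (hn : 0 < n) (p : HVert n) : cross p ≠ p := by
  intro h
  exact cross_fst_ne hn p (by rw [h])

lemma cross_inj (hn : 0 < n) : Function.Injective (cross (n := n)) := by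
  intro a b h
  have := congrArg cross h
  rwa [cross_cross, cross_cross] at this

lemma adj_iff (hn : 0 < n) {u v : HVert n} :
    (HCN n).Adj u v ↔ (u.1 = v.1 ∧ Qadj u.2 v.2) ∨ v = cross u ∨ u = cross v := by
  rw [HCN, SimpleGraph.fromRel_adj]
  constructor
  · rintro ⟨hne, h | h⟩
    · rcases h with h | h
      · exact Or.inl ⟨h.1, h.2⟩
      · exact Or.inr (Or.inl ((crossRel_iff u v).1 h))
    · rcases h with h | h
      · exact Or.inl ⟨h.1.symm, qadj_symm h.2⟩
      · exact Or.inr (Or.inr ((crossRel_iff v u).1 h))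
  · intro h
    rcases h with ⟨h1, h2⟩ | h | h
    · refine ⟨?_, Or.inl (Or.inl ⟨h1, h2⟩)⟩
      intro he; exact qadj_ne h2 (by rw [he])
    · refine ⟨?_, Or.inl (Or.inr ((crossRel_iff u v).2 h))⟩
      rintro rfl; exact cross_ne hn u h.symm
    · refine ⟨?_, Or.inr (Or.inr ((crossRel_iff v u).2 h))⟩
      rintro rfl; exact cross_ne hn u h.symm

lemma adj_iff' (hn : 0 < n) {u v : HVert n} :
    (HCN n).Adj u v ↔ (u.1 = v.1 ∧ ∃ i, v.2 = flipb i u.2) ∨ v = cross u := by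
  rw [adj_iff hn]
  constructor
  · rintro (⟨h1, h2⟩ | h | h)
    · exact Or.inl ⟨h1, qadj_iff.1 h2⟩
    · exact Or.inr h
    · exact Or.inr (by rw [h, cross_cross])
  · rintro (⟨h1, h2⟩ | h)
    · exact Or.inl ⟨h1, qadj_iff.2 h2⟩
    · exact Or.inr (Or.inl h)

end HCNaux

namespace HCNaux2
open HCNaux

variable {n : ℕ}

lemma mem_nbr_iff (hn : 0 < n) {p v : HVert n} :
    v ∈ (HCN n).neighborSet p ↔ (p.1 = v.1 ∧ ∃ i, v.2 = flipb i p.2) ∨ v = cross p :=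
  adj_iff' hn

lemma neighborSet_eq (hn : 0 < n) (p : HVert n) :
    (HCN n).neighborSet p = (Set.range fun i => (p.1, flipb i p.2)) ∪ {cross p} := by
  ext v
  rw [mem_nbr_iff hn]
  constructor
  · rintro (⟨h1, i, h2⟩ | h)
    · exact Or.inl ⟨i, Prod.ext h1 h2.symm⟩
    · exact Or.inr h
  · rintro (⟨i, hi⟩ | h)
    · exact Or.inl ⟨by rw [← hi], i, by rw [← hi]⟩
    · exact Or.inr h

lemma ncard_neighborSet (hn : 0 < n) (p : HVert n) :
    ((HCN n).neighborSet p).ncard = n + 1 := by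
  rw [neighborSet_eq hn]
  have hinj : Function.Injective (fun i => ((p.1, flipb i p.2) : HVert n)) := by
    intro i j hij
    exact flipb_inj_idx (congrArg Prod.snd hij)
  have hrange : (Set.range fun i => ((p.1, flipb i p.2) : HVert n)).ncard = n := by
    rw [← Set.image_univ, Set.ncard_image_of_injective _ hinj, Set.ncard_univ,
      Nat.card_eq_fintype_card, Fintype.card_fin]
  have hdisj : Disjoint (Set.range fun i => ((p.1, flipb i p.2) : HVert n)) ({cross p} : Set _) := by
    rw [Set.disjoint_singleton_right]
    rintro ⟨i, hi⟩
    exact cross_fst_ne hn p (by rw [← hi])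
  rw [Set.ncard_union_eq hdisj (Set.toFinite _) (Set.toFinite _), hrange, Set.ncard_singleton]

lemma flip_support {y z : Fin n → Bool} {i0 j0 i j : Fin n}
    (hne : y ≠ z) (h : flipb i0 y = flipb j0 z) (e : flipb i y = flipb j z) :
    i = i0 ∨ i = j0 := by
  have hij : i ≠ j := by
    rintro rfl
    apply hne
    have := congrArg (flipb i) e
    rwa [flipb_flipb, flipb_flipb] at this
  have hz : z = flipb j0 (flipb i0 y) := by
    have h2 := congrArg (flipb j0) h
    rw [flipb_flipb] at h2
    exact h2.symm
  have hzi : z i ≠ y i := by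
    have h1 : flipb i y i = !y i := flipb_apply_same i y
    have h2 : flipb j z i = z i := flipb_apply_ne hij z
    rw [e, h2] at h1
    rw [h1]
    cases y i <;> simp
  by_contra hcon
  push_neg at hcon
  obtain ⟨h1, h2⟩ := hcon
  rw [hz, flipb_apply_ne h2, flipb_apply_ne h1] at hzi
  exact hzi rfl

lemma no_triangle (hn : 0 < n) {p q r : HVert n}
    (hpq : (HCN n).Adj p q) (hqr : (HCN n).Adj q r) (hpr : (HCN n).Adj p r) : False := by
  have hpq' := (adj_iff' hn).1 hpq
  have hqr' := (adj_iff' hn).1 hqr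
  have hpr' := (adj_iff' hn).1 hpr
  rcases hpq' with ⟨hc1, k, hk⟩ | hq
  · rcases hqr' with ⟨hc2, j, hj⟩ | hr
    · rcases hpr' with ⟨hc3, i, hi⟩ | hr
      · -- all in-cluster: hypercube parity
        rw [hk] at hj
        by_cases hjk : j = k
        · subst hjk
          rw [flipb_flipb] at hj
          rw [hj] at hi
          exact flipb_ne i p.2 hi.symm
        · -- evaluate r.2 at j and k
          have hji : j = i := by
            apply eq_of_apply_ne_flipb hi
            rw [hj, flipb_apply_same, flipb_apply_ne hjk]
            cases p.2 j <;> simp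
          have hki : k = i := by
            apply eq_of_apply_ne_flipb hi
            rw [hj, flipb_apply_ne (Ne.symm hjk), flipb_apply_same]
            cases p.2 k <;> simp
          exact hjk (hji.trans hki.symm)
      · -- r = cross p, but r.1 = q.1 = p.1
        apply cross_fst_ne hn p
        rw [← hr, ← hc2, ← hc1]
    · -- r = cross q
      rcases hpr' with ⟨hc3, i, hi⟩ | hr'
      · apply cross_fst_ne hn q
        rw [← hr, ← hc3, hc1]
      · exact hpq.ne (cross_inj hn (hr'.symm.trans hr))
  · -- q = cross p
    rcases hqr' with ⟨hc2, j, hj⟩ | hr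
    · rcases hpr' with ⟨hc3, i, hi⟩ | hr'
      · exact cross_fst_ne hn p (by rw [← hq, hc2, ← hc3])
      · exact hqr.ne (hq.trans hr'.symm)
    · -- r = cross q = cross (cross p) = p
      apply hpr.ne
      rw [hr, hq, HCNaux.cross_cross]

lemma common_le_two (hn : 0 < n) {p q : HVert n} (hpq : p ≠ q) :
    ((HCN n).neighborSet p ∩ (HCN n).neighborSet q).ncard ≤ 2 := by
  by_cases hcl : p.1 = q.1
  · have hy : p.2 ≠ q.2 := fun h => hpq (Prod.ext hcl h)
    have hsub : ∀ t ∈ (HCN n).neighborSet p ∩ (HCN n).neighborSet q,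
        t.1 = p.1 ∧ ∃ i j, t.2 = flipb i p.2 ∧ t.2 = flipb j q.2 := by
      rintro t ⟨ht1, ht2⟩
      rcases (mem_nbr_iff hn).1 ht1 with ⟨he1, i, hi⟩ | hcp
      · rcases (mem_nbr_iff hn).1 ht2 with ⟨he2, j, hj⟩ | hcq
        · exact ⟨he1.symm, i, j, hi, hj⟩
        · exfalso
          apply cross_fst_ne hn q
          rw [← hcq, ← he1, hcl]
      · exfalso
        rcases (mem_nbr_iff hn).1 ht2 with ⟨he2, j, hj⟩ | hcq
        · apply cross_fst_ne hn p
          rw [← hcp, ← he2, ← hcl]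
        · exact hpq (cross_inj hn (hcp.symm.trans hcq))
    rcases Set.eq_empty_or_nonempty ((HCN n).neighborSet p ∩ (HCN n).neighborSet q) with he | ⟨t0, ht0⟩
    · rw [he]; simp
    · obtain ⟨hc0, i0, j0, hi0, hj0⟩ := hsub t0 ht0
      have hkey : flipb i0 p.2 = flipb j0 q.2 := hi0.symm.trans hj0
      have : (HCN n).neighborSet p ∩ (HCN n).neighborSet q ⊆
          {(p.1, flipb i0 p.2), (p.1, flipb j0 p.2)} := by
        intro t ht
        obtain ⟨hc, i, j, hi, hj⟩ := hsub t ht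
        have := flip_support hy hkey (hi.symm.trans hj)
        rcases this with h | h
        · left; subst h; exact Prod.ext hc hi
        · right; subst h; exact Prod.ext hc hi
      calc ((HCN n).neighborSet p ∩ (HCN n).neighborSet q).ncard
          ≤ ({(p.1, flipb i0 p.2), (p.1, flipb j0 p.2)} : Set (HVert n)).ncard :=
            Set.ncard_le_ncard this (Set.toFinite _)
        _ ≤ 2 := (Set.ncard_insert_le _ _).trans (by simp)
  · have : (HCN n).neighborSet p ∩ (HCN n).neighborSet q ⊆ {cross p, cross q} := by
      rintro t ⟨ht1, ht2⟩
      rcases (mem_nbr_iff hn).1 ht1 with ⟨he1, _⟩ | hcp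
      · rcases (mem_nbr_iff hn).1 ht2 with ⟨he2, _⟩ | hcq
        · exact absurd (he1.trans he2.symm) hcl
        · right; exact hcq
      · left; exact hcp
    calc _ ≤ ({cross p, cross q} : Set (HVert n)).ncard := Set.ncard_le_ncard this (Set.toFinite _)
      _ ≤ 2 := (Set.ncard_insert_le _ _).trans (by simp)

end HCNaux2

namespace HCNaux3
open HCNaux HCNaux2

variable {n : ℕ}

def RA (A : Set (HVert n)) (a b : HVert n) : Prop :=
  (HCN n).Adj a b ∧ a ∉ A ∧ b ∉ A

def row (x : Fin n → Bool) : Set (HVert n) := {z | z.1 = x}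

lemma reach_symmH (A : Set (HVert n)) {p q : HVert n}
    (h : Relation.ReflTransGen (RA A) p q) : Relation.ReflTransGen (RA A) q p := by
  induction h with
  | refl => exact Relation.ReflTransGen.refl
  | tail _ hstep ih =>
      exact Relation.ReflTransGen.trans
        (Relation.ReflTransGen.single ⟨hstep.1.symm, hstep.2.2, hstep.2.1⟩) ih

lemma broken_unique {A : Set (HVert n)} (hA : A.ncard < 2 * n) {x y : Fin n → Bool}
    (hx : n ≤ (A ∩ row x).ncard) (hy : n ≤ (A ∩ row y).ncard) : x = y := by
  by_contra hne
  have hdisj : Disjoint (A ∩ row x) (A ∩ row y) := by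
    rw [Set.disjoint_left]
    rintro z ⟨_, hz1⟩ ⟨_, hz2⟩
    exact hne (hz1.symm.trans hz2)
  have hsub : (A ∩ row x) ∪ (A ∩ row y) ⊆ A := by
    rintro z (⟨hz, _⟩ | ⟨hz, _⟩) <;> exact hz
  have := Set.ncard_le_ncard hsub (Set.toFinite _)
  rw [Set.ncard_union_eq hdisj (Set.toFinite _) (Set.toFinite _)] at this
  omega

lemma cluster_reach (hn : 0 < n) {A : Set (HVert n)} {x : Fin n → Bool}
    (hx : (A ∩ row x).ncard < n) {y y' : Fin n → Bool}
    (hy : ((x, y) : HVert n) ∉ A) (hy' : ((x, y') : HVert n) ∉ A) :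
    Relation.ReflTransGen (RA A) (x, y) (x, y') := by
  set S : Set (Fin n → Bool) := {g | ((x, g) : HVert n) ∈ A} with hSdef
  have hScard : S.ncard ≤ (A ∩ row x).ncard := by
    have himg : (fun g => ((x, g) : HVert n)) '' S ⊆ A ∩ row x := by
      rintro z ⟨g, hg, rfl⟩
      exact ⟨hg, rfl⟩
    have hinj : Function.Injective (fun g => ((x, g) : HVert n)) := by
      intro a b h
      exact congrArg Prod.snd h
    calc S.ncard = ((fun g => ((x, g) : HVert n)) '' S).ncard :=
          (Set.ncard_image_of_injective _ hinj).symm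
      _ ≤ _ := Set.ncard_le_ncard himg (Set.toFinite _)
  have hq := qreach n S (lt_of_le_of_lt hScard hx) y hy y' hy'
  -- lift the hypercube walk to HCN
  clear hy hy'
  induction hq with
  | refl => exact Relation.ReflTransGen.refl
  | tail _ hstep ih =>
      refine ih.tail ⟨?_, hstep.2.1, hstep.2.2⟩
      exact (adj_iff hn).2 (Or.inl ⟨rfl, hstep.1⟩)

lemma cross_adj (hn : 0 < n) (z : HVert n) : (HCN n).Adj z (cross z) :=
  (adj_iff hn).2 (Or.inr (Or.inl rfl))

lemma cross_of_ne {x z : Fin n → Bool} (h : x ≠ z) : cross ((x, z) : HVert n) = (z, x) := by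
  unfold cross
  simp [h]

lemma two_n_lt_pow (hn : 3 ≤ n) : 2 * n + 1 < 2 ^ n := by
  obtain ⟨m, rfl⟩ : ∃ m, n = m + 3 := ⟨n - 3, by omega⟩
  induction m with
  | zero => norm_num
  | succ k ih =>
      have h8 : (2:ℕ) ≤ 2 ^ (k + 3) := by
        calc (2:ℕ) ≤ 2 ^ 3 := by norm_num
          _ ≤ 2 ^ (k + 3) := Nat.pow_le_pow_right (by norm_num) (by omega)
      have := ih (by omega)
      rw [pow_succ]
      omega

lemma card_univ_cluster : (Set.univ : Set (Fin n → Bool)).ncard = 2 ^ n := by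
  rw [Set.ncard_univ, Nat.card_eq_fintype_card]
  simp [Fintype.card_fun]

lemma nonbroken_pair_reach (hn : 3 ≤ n) {A : Set (HVert n)} (hA : A.ncard < 2 * n)
    {x z : Fin n → Bool} (hxz : x ≠ z)
    (hx : (A ∩ row x).ncard < n) (hz : (A ∩ row z).ncard < n)
    {k l : HVert n} (hk : k ∉ A) (hl : l ∉ A) (hkx : k.1 = x) (hlz : l.1 = z) :
    Relation.ReflTransGen (RA A) k l := by
  classical
  have hn0 : 0 < n := by omega
  obtain ⟨yk, rfl⟩ : ∃ yk, k = (x, yk) := ⟨k.2, by rw [← hkx]⟩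
  obtain ⟨yl, rfl⟩ : ∃ yl, l = (z, yl) := ⟨l.2, by rw [← hlz]⟩
  by_cases hdir : ((x, z) : HVert n) ∉ A ∧ ((z, x) : HVert n) ∉ A
  · obtain ⟨hd1, hd2⟩ := hdir
    have p1 : Relation.ReflTransGen (RA A) (x, yk) ((x, z) : HVert n) :=
      cluster_reach hn0 hx hk hd1
    have p2 : Relation.ReflTransGen (RA A) ((x, z) : HVert n) ((z, x) : HVert n) := by
      refine Relation.ReflTransGen.single ⟨?_, hd1, hd2⟩
      have := cross_adj hn0 ((x, z) : HVert n)
      rwa [cross_of_ne hxz] at this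
    have p3 : Relation.ReflTransGen (RA A) ((z, x) : HVert n) (z, yl) :=
      cluster_reach hn0 hz hd2 hl
    exact (p1.trans p2).trans p3
  · -- the direct pair is blocked; find an intermediate nonbroken cluster t
    push_neg at hdir
    have hg0 : ∃ g0, g0 ∈ A ∧ (g0 = ((x, z) : HVert n) ∨ g0 = ((z, x) : HVert n)) := by
      by_cases h : ((x, z) : HVert n) ∈ A
      · exact ⟨_, h, Or.inl rfl⟩
      · exact ⟨_, hdir h, Or.inr rfl⟩
    obtain ⟨g0, hg0A, hg0form⟩ := hg0
    set T : Set (Fin n → Bool) := {t | t ≠ x ∧ t ≠ z ∧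
      (((x, t) : HVert n) ∈ A ∨ ((t, x) : HVert n) ∈ A ∨
       ((t, z) : HVert n) ∈ A ∨ ((z, t) : HVert n) ∈ A)} with hTdef
    set ι : (Fin n → Bool) → HVert n := fun t =>
      if ((x, t) : HVert n) ∈ A then (x, t)
      else if ((t, x) : HVert n) ∈ A then (t, x)
      else if ((t, z) : HVert n) ∈ A then (t, z)
      else (z, t) with hιdef
    have hforms : ∀ t ∈ T, ι t ∈ A ∧ (ι t = ((x, t) : HVert n) ∨ ι t = ((t, x) : HVert n) ∨
        ι t = ((t, z) : HVert n) ∨ ι t = ((z, t) : HVert n)) := by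
      rintro t ⟨htx, htz, hdisj⟩
      rw [hιdef]
      dsimp only
      split_ifs with h1 h2 h3
      · exact ⟨h1, Or.inl rfl⟩
      · exact ⟨h2, Or.inr (Or.inl rfl)⟩
      · exact ⟨h3, Or.inr (Or.inr (Or.inl rfl))⟩
      · refine ⟨?_, Or.inr (Or.inr (Or.inr rfl))⟩
        rcases hdisj with h | h | h | h
        · exact absurd h h1
        · exact absurd h h2
        · exact absurd h h3
        · exact h
    have hinjT : Set.InjOn ι T := by
      intro t ht t' ht' heq
      obtain ⟨htx, htz, hd3⟩ := ht
      obtain ⟨htx', htz', hd3'⟩ := ht'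
      rcases (hforms t ⟨htx, htz, hd3⟩).2 with h|h|h|h <;>
        rcases (hforms t' ⟨htx', htz', hd3'⟩).2 with h'|h'|h'|h' <;>
        rw [h, h'] at heq <;>
        simp only [Prod.mk.injEq] at heq
      all_goals first | exact heq.1 | exact heq.2 | simp_all
    have hTimg : ι '' T ⊆ A \ {((x, z) : HVert n), ((z, x) : HVert n)} := by
      rintro w ⟨t, ht, rfl⟩
      obtain ⟨htx, htz, hd3⟩ := ht
      refine ⟨(hforms t ⟨htx, htz, hd3⟩).1, ?_⟩
      intro hmem
      simp only [Set.mem_insert_iff, Set.mem_singleton_iff] at hmem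
      rcases (hforms t ⟨htx, htz, hd3⟩).2 with h|h|h|h <;> rw [h] at hmem <;>
        rcases hmem with hm | hm <;> simp only [Prod.mk.injEq] at hm <;> simp_all
    have hTcard : T.ncard + 1 ≤ A.ncard := by
      have h1 : T.ncard = (ι '' T).ncard := (Set.ncard_image_of_injOn hinjT).symm
      have h2 : (ι '' T).ncard ≤ (A \ {g0}).ncard := by
        refine Set.ncard_le_ncard ?_ (Set.toFinite _)
        intro w hw
        obtain ⟨hwA, hwne⟩ := hTimg hw
        refine ⟨hwA, ?_⟩
        intro hg
        apply hwne
        rw [Set.mem_singleton_iff] at hg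
        rcases hg0form with hf | hf
        · rw [hg, hf]; exact Set.mem_insert _ _
        · rw [hg, hf]; exact Set.mem_insert_of_mem _ rfl
      have h3 : (A \ {g0}).ncard = A.ncard - 1 := Set.ncard_diff_singleton_of_mem hg0A
      have h4 : 1 ≤ A.ncard := by
        rw [Nat.one_le_iff_ne_zero]
        intro h
        rw [(Set.ncard_eq_zero (Set.toFinite _)).1 h] at hg0A
        exact hg0A
      omega
    have hBrk : ({t | n ≤ (A ∩ row t).ncard} : Set (Fin n → Bool)).ncard ≤ 1 := by
      rcases Set.eq_empty_or_nonempty ({t | n ≤ (A ∩ row t).ncard} : Set (Fin n → Bool)) with he | ⟨t0, ht0⟩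
      · rw [he]; simp
      · have : ({t | n ≤ (A ∩ row t).ncard} : Set (Fin n → Bool)) ⊆ {t0} := by
          intro t ht
          exact broken_unique hA ht ht0
        calc _ ≤ ({t0} : Set (Fin n → Bool)).ncard := Set.ncard_le_ncard this (Set.toFinite _)
          _ = 1 := Set.ncard_singleton _
    -- find a good intermediate cluster t
    have hex : ∃ t : Fin n → Bool, t ≠ x ∧ t ≠ z ∧ (A ∩ row t).ncard < n ∧
        ((x, t) : HVert n) ∉ A ∧ ((t, x) : HVert n) ∉ A ∧
        ((t, z) : HVert n) ∉ A ∧ ((z, t) : HVert n) ∉ A := by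
      by_contra hcon
      push_neg at hcon
      have hsubBad : (Set.univ : Set (Fin n → Bool)) ⊆
          ({x} ∪ {z} ∪ {t | n ≤ (A ∩ row t).ncard} ∪ T) := by
        intro t _
        by_cases h1 : t = x
        · exact Or.inl (Or.inl (Or.inl h1))
        by_cases h2 : t = z
        · exact Or.inl (Or.inl (Or.inr h2))
        by_cases h3 : (A ∩ row t).ncard < n
        · -- then the pair condition must fail, so t ∈ T
          right
          refine ⟨h1, h2, ?_⟩
          by_contra hall
          push_neg at hall
          obtain ⟨ha1, ha2, ha3, ha4⟩ := hall
          exact ha4 (hcon t h1 h2 h3 ha1 ha2 ha3)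
        · exact Or.inl (Or.inr (show n ≤ (A ∩ row t).ncard by omega))
      have hc : (Set.univ : Set (Fin n → Bool)).ncard ≤ 2 + 1 + T.ncard := by
        calc (Set.univ : Set (Fin n → Bool)).ncard
            ≤ (({x} ∪ {z} ∪ {t | n ≤ (A ∩ row t).ncard} ∪ T) : Set (Fin n → Bool)).ncard :=
              Set.ncard_le_ncard hsubBad (Set.toFinite _)
          _ ≤ (({x} ∪ {z} ∪ {t | n ≤ (A ∩ row t).ncard}) : Set (Fin n → Bool)).ncard + T.ncard :=
              Set.ncard_union_le _ _
          _ ≤ (({x} ∪ {z}) : Set (Fin n → Bool)).ncard +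
                ({t | n ≤ (A ∩ row t).ncard} : Set (Fin n → Bool)).ncard + T.ncard := by
              have := Set.ncard_union_le (({x} ∪ {z}) : Set (Fin n → Bool))
                ({t | n ≤ (A ∩ row t).ncard} : Set (Fin n → Bool))
              omega
          _ ≤ 2 + 1 + T.ncard := by
              have h1 : (({x} ∪ {z}) : Set (Fin n → Bool)).ncard ≤ 2 := by
                have := Set.ncard_union_le ({x} : Set (Fin n → Bool)) ({z} : Set (Fin n → Bool))
                simp only [Set.ncard_singleton] at this
                omega
              omega
      rw [card_univ_cluster] at hc
      have := two_n_lt_pow hn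
      omega
    obtain ⟨t, htx, htz, htnb, ha1, ha2, ha3, ha4⟩ := hex
    have p1 : Relation.ReflTransGen (RA A) (x, yk) ((x, t) : HVert n) :=
      cluster_reach hn0 hx hk ha1
    have p2 : Relation.ReflTransGen (RA A) ((x, t) : HVert n) ((t, x) : HVert n) := by
      refine Relation.ReflTransGen.single ⟨?_, ha1, ha2⟩
      have := cross_adj hn0 ((x, t) : HVert n)
      rwa [cross_of_ne (fun h => htx h.symm)] at this
    have p3 : Relation.ReflTransGen (RA A) ((t, x) : HVert n) ((t, z) : HVert n) :=
      cluster_reach hn0 htnb ha2 ha3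
    have p4 : Relation.ReflTransGen (RA A) ((t, z) : HVert n) ((z, t) : HVert n) := by
      refine Relation.ReflTransGen.single ⟨?_, ha3, ha4⟩
      have := cross_adj hn0 ((t, z) : HVert n)
      rwa [cross_of_ne htz] at this
    have p5 : Relation.ReflTransGen (RA A) ((z, t) : HVert n) (z, yl) :=
      cluster_reach hn0 hz ha4 hl
    exact (((p1.trans p2).trans p3).trans p4).trans p5

lemma flip_flip_false {y : Fin n → Bool} {i j i0 : Fin n} (hj : j ≠ i0)
    (h : flipb i y = flipb j (flipb i0 y)) : False := by
  have hji : j = i := by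
    apply eq_of_apply_ne_flipb h.symm
    rw [flipb_apply_same, flipb_apply_ne hj]
    cases y j <;> simp
  have hi0i : i0 = i := by
    apply eq_of_apply_ne_flipb h.symm
    rw [flipb_apply_ne (fun hh : i0 = j => hj hh.symm), flipb_apply_same]
    cases y i0 <;> simp
  exact hj (hji.trans hi0i.symm)

lemma good_reach (hn : 3 ≤ n) {A : Set (HVert n)} (hA : A.ncard < 2 * n)
    (hgood : ∀ z ∉ A, ∃ t, (HCN n).Adj z t ∧ t ∉ A) {k : HVert n} (hk : k ∉ A) :
    ∃ m', m' ∉ A ∧ (A ∩ row m'.1).ncard < n ∧ Relation.ReflTransGen (RA A) k m' := by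
  have hn0 : 0 < n := by omega
  by_cases hbk : (A ∩ row k.1).ncard < n
  · exact ⟨k, hk, hbk, Relation.ReflTransGen.refl⟩
  push_neg at hbk
  by_contra hcon
  push_neg at hcon
  have hKmem : ∀ z, Relation.ReflTransGen (RA A) k z → z ∉ A ∧ z.1 = k.1 := by
    intro z hz
    induction hz with
    | refl => exact ⟨hk, rfl⟩
    | tail hprev hstep ih =>
        refine ⟨hstep.2.2, ?_⟩
        rename_i b c
        by_cases hb2 : (A ∩ row c.1).ncard < n
        · exact absurd (hprev.tail hstep) (hcon c hstep.2.2 hb2)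
        · push_neg at hb2
          exact broken_unique hA hb2 hbk
  set K : Set (HVert n) := {z | Relation.ReflTransGen (RA A) k z} with hKdef
  have hKcross : ∀ z ∈ K, cross z ∈ A := by
    intro z hz
    by_contra hcr
    have hzA : z ∉ A := (hKmem z hz).1
    have hreach : Relation.ReflTransGen (RA A) k (cross z) :=
      hz.tail ⟨cross_adj hn0 z, hzA, hcr⟩
    by_cases hb2 : (A ∩ row (cross z).1).ncard < n
    · exact hcon (cross z) hcr hb2 hreach
    · push_neg at hb2
      have := broken_unique hA hb2 hbk
      have h2 := cross_fst_ne hn0 z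
      rw [(hKmem z hz).2] at h2
      exact h2 this
  obtain ⟨k', hadj, hk'⟩ := hgood k hk
  have hk'K : k' ∈ K := Relation.ReflTransGen.single ⟨hadj, hk, hk'⟩
  have hkK : k ∈ K := Relation.ReflTransGen.refl
  have hk'x : k'.1 = k.1 := (hKmem k' hk'K).2
  have hkk' : k ≠ k' := hadj.ne
  obtain ⟨i0, hi0⟩ : ∃ i0, k'.2 = flipb i0 k.2 := by
    rcases (adj_iff' hn0).1 hadj with ⟨_, hex⟩ | hcr
    · exact hex
    · exact absurd (by rw [← hcr]; exact hk'x) (cross_fst_ne hn0 k)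
  have hk2 : k.2 = flipb i0 k'.2 := by rw [hi0, flipb_flipb]
  set U1 : Set (HVert n) := (fun i => ((k.1, flipb i k.2) : HVert n)) '' {i | i ≠ i0} with hU1def
  set U2 : Set (HVert n) := (fun i => ((k.1, flipb i k'.2) : HVert n)) '' {i | i ≠ i0} with hU2def
  have hidxcard : ({i | i ≠ i0} : Set (Fin n)).ncard + 1 = n := by
    have h1 : ({i | i ≠ i0} : Set (Fin n)) = Set.univ \ {i0} := by
      ext i; simp
    rw [h1, Set.ncard_diff (by simp) (Set.toFinite _), Set.ncard_univ, Set.ncard_singleton,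
      Nat.card_eq_fintype_card, Fintype.card_fin]
    omega
  have hinj1 : Function.Injective (fun i => ((k.1, flipb i k.2) : HVert n)) := by
    intro a b h
    exact flipb_inj_idx (congrArg Prod.snd h)
  have hinj2 : Function.Injective (fun i => ((k.1, flipb i k'.2) : HVert n)) := by
    intro a b h
    exact flipb_inj_idx (congrArg Prod.snd h)
  have hU1card : U1.ncard + 1 = n := by
    rw [hU1def, Set.ncard_image_of_injective _ hinj1]; exact hidxcard
  have hU2card : U2.ncard + 1 = n := by
    rw [hU2def, Set.ncard_image_of_injective _ hinj2]; exact hidxcard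
  have hU12disj : Disjoint U1 U2 := by
    rw [Set.disjoint_left]
    rintro t ⟨i, hi, rfl⟩ ⟨j, hj, hji⟩
    have h2 : flipb j k'.2 = flipb i k.2 := congrArg Prod.snd hji
    rw [hi0] at h2
    exact flip_flip_false hj h2.symm
  -- every element of U1 ∪ U2 is in (K \ {k, k'}) ∪ (A ∩ row k.1)
  have hmemU : ∀ t ∈ U1 ∪ U2, t ∈ (K \ {k, k'}) ∪ (A ∩ row k.1) := by
    rintro t (⟨i, hi, rfl⟩ | ⟨i, hi, rfl⟩)
    · by_cases htA : ((k.1, flipb i k.2) : HVert n) ∈ A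
      · exact Or.inr ⟨htA, rfl⟩
      · have hadj2 : (HCN n).Adj k (k.1, flipb i k.2) :=
          (adj_iff' hn0).2 (Or.inl ⟨rfl, i, rfl⟩)
        refine Or.inl ⟨hkK.tail ⟨hadj2, hk, htA⟩, ?_⟩
        simp only [Set.mem_insert_iff, Set.mem_singleton_iff, not_or]
        constructor
        · intro h
          exact flipb_ne i k.2 (congrArg Prod.snd h.symm).symm
        · intro h
          have : flipb i k.2 = flipb i0 k.2 := by
            rw [← hi0]; exact congrArg Prod.snd h
          exact hi (flipb_inj_idx this)
    · by_cases htA : ((k.1, flipb i k'.2) : HVert n) ∈ A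
      · exact Or.inr ⟨htA, rfl⟩
      · have hadj2 : (HCN n).Adj k' (k.1, flipb i k'.2) :=
          (adj_iff' hn0).2 (Or.inl ⟨hk'x, i, rfl⟩)
        refine Or.inl ⟨hk'K.tail ⟨hadj2, hk', htA⟩, ?_⟩
        simp only [Set.mem_insert_iff, Set.mem_singleton_iff, not_or]
        constructor
        · intro h
          have : flipb i k'.2 = flipb i0 k'.2 := by
            rw [← hk2]; exact congrArg Prod.snd h
          exact hi (flipb_inj_idx this)
        · intro h
          exact flipb_ne i k'.2 (congrArg Prod.snd h.symm).symm
  -- counting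
  have hpairK : ({k, k'} : Set (HVert n)) ⊆ K := by
    rintro t (rfl | rfl)
    · exact hkK
    · exact hk'K
  have hKge2 : 2 ≤ K.ncard := by
    calc 2 = ({k, k'} : Set (HVert n)).ncard := (Set.ncard_pair hkk').symm
      _ ≤ K.ncard := Set.ncard_le_ncard hpairK (Set.toFinite _)
  have hKdiff : (K \ {k, k'}).ncard = K.ncard - 2 := by
    rw [Set.ncard_diff hpairK (Set.toFinite _), Set.ncard_pair hkk']
  have hKA : (A ∩ row k.1).ncard + K.ncard ≤ A.ncard := by
    have hsub : (A ∩ row k.1) ∪ cross '' K ⊆ A := by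
      rintro t (⟨ht, _⟩ | ⟨z, hz, rfl⟩)
      · exact ht
      · exact hKcross z hz
    have hdisj : Disjoint (A ∩ row k.1) (cross '' K) := by
      rw [Set.disjoint_left]
      rintro t ⟨_, ht2⟩ ⟨z, hz, rfl⟩
      have h2 := cross_fst_ne hn0 z
      rw [(hKmem z hz).2] at h2
      exact h2 ht2
    calc (A ∩ row k.1).ncard + K.ncard
        = (A ∩ row k.1).ncard + (cross '' K).ncard := by
          rw [Set.ncard_image_of_injective _ (cross_inj hn0)]
      _ = ((A ∩ row k.1) ∪ cross '' K).ncard :=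
          (Set.ncard_union_eq hdisj (Set.toFinite _) (Set.toFinite _)).symm
      _ ≤ A.ncard := Set.ncard_le_ncard hsub (Set.toFinite _)
  have hUcount : (U1 ∪ U2).ncard ≤ (K \ {k, k'}).ncard + (A ∩ row k.1).ncard := by
    calc (U1 ∪ U2).ncard ≤ ((K \ {k, k'}) ∪ (A ∩ row k.1)).ncard :=
          Set.ncard_le_ncard hmemU (Set.toFinite _)
      _ ≤ _ := Set.ncard_union_le _ _
  have hU12card : (U1 ∪ U2).ncard + 2 = n + n := by
    rw [Set.ncard_union_eq hU12disj (Set.toFinite _) (Set.toFinite _)]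
    omega
  omega

theorem kappa_reach (hn : 3 ≤ n) {A : Set (HVert n)} (hA : A.ncard < 2 * n)
    (hgood : ∀ z ∉ A, ∃ t, (HCN n).Adj z t ∧ t ∉ A) {p q : HVert n}
    (hp : p ∉ A) (hq : q ∉ A) : Relation.ReflTransGen (RA A) p q := by
  have hn0 : 0 < n := by omega
  obtain ⟨mp, hmpA, hmpnb, hreachp⟩ := good_reach hn hA hgood hp
  obtain ⟨mq, hmqA, hmqnb, hreachq⟩ := good_reach hn hA hgood hq
  have hmid : Relation.ReflTransGen (RA A) mp mq := by
    by_cases hc : mp.1 = mq.1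
    · have := cluster_reach hn0 (x := mp.1) hmpnb (y := mp.2) (y' := mq.2)
        (by rwa [Prod.mk.eta]) (by rw [hc, Prod.mk.eta]; exact hmqA)
      rw [Prod.mk.eta] at this
      rw [hc, Prod.mk.eta] at this
      exact this
    · exact nonbroken_pair_reach hn hA hc hmpnb hmqnb hmpA hmqA rfl rfl
  exact (hreachp.trans hmid).trans (reach_symmH A hreachq)

end HCNaux3

section Main
open HCNaux HCNaux2 HCNaux3

/-- For n ≥ 3: if F₁ ≠ F₂ are 1-good-neighbor faulty sets of HCN_n of size at
most 2n+1 which violate all three MM* distinguishability conditions, then the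
subgraph induced on V \ (F₁ ∪ F₂) has no isolated vertex. -/
theorem stmt_18 (n : ℕ) (hn : 3 ≤ n)
    (F1 F2 : Set (HVert n)) (hne : F1 ≠ F2)
    (h1 : GoodNbrSet n 1 F1) (h2 : GoodNbrSet n 1 F2)
    (hc1 : F1.ncard ≤ 2 * n + 1) (hc2 : F2.ncard ≤ 2 * n + 1)
    (hcond1 : ∀ u ∉ F1 ∪ F2, ∀ w ∉ F1 ∪ F2, (HCN n).Adj u w →
      ∀ v ∈ symmDiff F1 F2, ¬ (HCN n).Adj v w)
    (hcond2 : ∀ w ∉ F1 ∪ F2, ¬ ∃ u ∈ F1 \ F2, ∃ v ∈ F1 \ F2,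
      u ≠ v ∧ (HCN n).Adj u w ∧ (HCN n).Adj v w)
    (hcond3 : ∀ w ∉ F1 ∪ F2, ¬ ∃ u ∈ F2 \ F1, ∃ v ∈ F2 \ F1,
      u ≠ v ∧ (HCN n).Adj u w ∧ (HCN n).Adj v w) :
    ∀ w ∉ F1 ∪ F2, ∃ z ∉ F1 ∪ F2, (HCN n).Adj w z := by
  intro w hw
  by_contra hiso
  push_neg at hiso
  have hn0 : 0 < n := by omega
  have hwiso : ∀ z, (HCN n).Adj w z → z ∈ F1 ∪ F2 := by
    intro z hz
    by_contra hzout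
    exact hiso z hzout hz
  have hw1 : w ∉ F1 := fun h => hw (Or.inl h)
  have hw2 : w ∉ F2 := fun h => hw (Or.inr h)
  -- generic accessor for the good-neighbor property
  have hget : ∀ (F : Set (HVert n)), GoodNbrSet n 1 F → ∀ y, y ∉ F →
      ∃ t, (HCN n).Adj y t ∧ t ∉ F := by
    intro F hF y hyF
    have h := hF y hyF
    have hne' : ((HCN n).neighborSet y \ F).Nonempty :=
      Set.nonempty_of_ncard_ne_zero (by omega)
    obtain ⟨t, ht1, ht2⟩ := hne'
    exact ⟨t, ht1, ht2⟩
  obtain ⟨v, hwv, hv1⟩ := hget F1 h1 w hw1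
  obtain ⟨u, hwu, hu2⟩ := hget F2 h2 w hw2
  have hvD2 : v ∈ F2 \ F1 := ⟨(hwiso v hwv).resolve_left hv1, hv1⟩
  have huD1 : u ∈ F1 \ F2 := ⟨(hwiso u hwu).resolve_right hu2, hu2⟩
  have huv : u ≠ v := fun h => hv1 (h ▸ huD1.1)
  set A : Set (HVert n) := F1 ∩ F2 with hAdef
  have hwA : w ∉ A := fun h => hw1 h.1
  have huA : u ∉ A := fun h => huD1.2 h.2
  have hvA : v ∉ A := fun h => hvD2.2 h.1
  -- the set of isolated vertices
  set W : Set (HVert n) := {z | z ∉ F1 ∪ F2 ∧ ∀ t, (HCN n).Adj z t → t ∈ F1 ∪ F2} with hWdef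
  have hwW : w ∈ W := ⟨hw, hwiso⟩
  have hisoW : ∀ z, z ∉ F1 ∪ F2 → ∀ s, s ∈ (F1 \ F2) ∪ (F2 \ F1) →
      (HCN n).Adj s z → z ∈ W := by
    intro z hz s hs hadj
    refine ⟨hz, ?_⟩
    intro t hadjt
    by_contra ht
    refine hcond1 t ht z hz hadjt.symm s ?_ hadj
    rw [Set.mem_symmDiff]
    rcases hs with h | h
    · exact Or.inl ⟨h.1, h.2⟩
    · exact Or.inr ⟨h.1, h.2⟩
  -- A is a good (fault) set
  have hgoodA : ∀ z ∉ A, ∃ t, (HCN n).Adj z t ∧ t ∉ A := by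
    intro z hz
    by_cases hz1 : z ∈ F1
    · have hz2 : z ∉ F2 := fun h => hz ⟨hz1, h⟩
      obtain ⟨t, ht1, ht2⟩ := hget F2 h2 z hz2
      exact ⟨t, ht1, fun h => ht2 h.2⟩
    · obtain ⟨t, ht1, ht2⟩ := hget F1 h1 z hz1
      exact ⟨t, ht1, fun h => ht2 h.1⟩
  -- everything reachable from w avoiding A stays in W ∪ (F1 \ F2) ∪ (F2 \ F1)
  have hCsub : ∀ z, Relation.ReflTransGen (RA A) w z →
      z ∈ W ∪ ((F1 \ F2) ∪ (F2 \ F1)) := by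
    intro z hz
    induction hz with
    | refl => exact Or.inl hwW
    | tail hprev hstep ih =>
        rename_i b c
        by_cases hc' : c ∈ F1 ∪ F2
        · right
          rcases hc' with h | h
          · exact Or.inl ⟨h, fun h2 => hstep.2.2 ⟨h, h2⟩⟩
          · by_cases h1' : c ∈ F1
            · exact absurd ⟨h1', h⟩ hstep.2.2
            · exact Or.inr ⟨h, h1'⟩
        · rcases ih with hbW | hbD
          · exact absurd (hbW.2 c hstep.1) hc'
          · exact Or.inl (hisoW c hc' b hbD hstep.1)
  -- there is a vertex outside F1 ∪ F2 whose crossing neighbour is also outside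
  have hh : ∃ h : HVert n, h ∉ F1 ∪ F2 ∧ cross h ∉ F1 ∪ F2 := by
    by_contra hcon
    push_neg at hcon
    have hsub : (Set.univ : Set (HVert n)) ⊆ (F1 ∪ F2) ∪ cross '' (F1 ∪ F2) := by
      intro h _
      by_cases h1' : h ∈ F1 ∪ F2
      · exact Or.inl h1'
      · right
        refine ⟨cross h, hcon h h1', ?_⟩
        exact HCNaux.cross_cross h
    have hcard1 : (F1 ∪ F2).ncard ≤ 4 * n + 2 := by
      have := Set.ncard_union_le F1 F2
      omega
    have hcard2 : (cross '' (F1 ∪ F2)).ncard ≤ 4 * n + 2 := by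
      rw [Set.ncard_image_of_injective _ (cross_inj hn0)]
      exact hcard1
    have hcard3 : (Set.univ : Set (HVert n)).ncard ≤ 8 * n + 4 := by
      have := Set.ncard_union_le (F1 ∪ F2) (cross '' (F1 ∪ F2))
      have h4 := Set.ncard_le_ncard hsub (Set.toFinite _)
      omega
    have huniv : (Set.univ : Set (HVert n)).ncard = 2 ^ n * 2 ^ n := by
      rw [Set.ncard_univ, Nat.card_eq_fintype_card, Fintype.card_prod]
      simp [Fintype.card_fun]
    have hp1 : 2 * n + 1 < 2 ^ n := two_n_lt_pow hn
    have hp2 : 4 ≤ 2 ^ n := by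
      calc (4:ℕ) = 2 ^ 2 := by norm_num
        _ ≤ 2 ^ n := Nat.pow_le_pow_right (by norm_num) (by omega)
    have hbig : 8 * n + 4 < 2 ^ n * 2 ^ n := by
      calc 8 * n + 4 = 4 * (2 * n + 1) := by ring
        _ < 4 * 2 ^ n := by omega
        _ ≤ 2 ^ n * 2 ^ n := Nat.mul_le_mul_right _ hp2
    omega
  obtain ⟨h, hhout, hhcross⟩ := hh
  have hhW : h ∉ W ∪ ((F1 \ F2) ∪ (F2 \ F1)) := by
    rintro (hW' | hD')
    · exact hhcross (hW'.2 (cross h) (cross_adj hn0 h))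
    · rcases hD' with h' | h'
      · exact hhout (Or.inl h'.1)
      · exact hhout (Or.inr h'.1)
  have hhA : h ∉ A := fun h' => hhout (Or.inl h'.1)
  -- A must be large
  have hAbig : 2 * n ≤ A.ncard := by
    by_contra hsmall
    push_neg at hsmall
    have := kappa_reach hn hsmall hgoodA hwA hhA
    exact hhW (hCsub h this)
  -- F1 \ F2 and F2 \ F1 are singletons
  have hsplit1 : A.ncard + (F1 \ F2).ncard = F1.ncard := by
    rw [← Set.ncard_union_eq (by
      rw [Set.disjoint_left]; rintro z ⟨_, hz2⟩ ⟨_, hz3⟩; exact hz3 hz2)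
      (Set.toFinite _) (Set.toFinite _)]
    rw [hAdef, Set.inter_union_diff]
  have hsplit2 : A.ncard + (F2 \ F1).ncard = F2.ncard := by
    rw [← Set.ncard_union_eq (by
      rw [Set.disjoint_left]; rintro z ⟨hz1, _⟩ ⟨_, hz3⟩; exact hz3 hz1)
      (Set.toFinite _) (Set.toFinite _)]
    have : F2 ∩ F1 ∪ F2 \ F1 = F2 := Set.inter_union_diff F2 F1
    rw [hAdef, Set.inter_comm, this]
  have hD1card : (F1 \ F2).ncard = 1 := by
    have h1' : 1 ≤ (F1 \ F2).ncard := by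
      rw [Nat.one_le_iff_ne_zero]
      intro h'
      rw [(Set.ncard_eq_zero (Set.toFinite _)).1 h'] at huD1
      exact huD1
    omega
  have hD2card : (F2 \ F1).ncard = 1 := by
    have h1' : 1 ≤ (F2 \ F1).ncard := by
      rw [Nat.one_le_iff_ne_zero]
      intro h'
      rw [(Set.ncard_eq_zero (Set.toFinite _)).1 h'] at hvD2
      exact hvD2
    omega
  have hAle : A.ncard ≤ 2 * n := by omega
  have hD1 : F1 \ F2 = {u} := by
    obtain ⟨a, ha⟩ := Set.ncard_eq_one.1 hD1card
    rw [ha]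
    rw [ha] at huD1
    rw [huD1]
  have hD2 : F2 \ F1 = {v} := by
    obtain ⟨a, ha⟩ := Set.ncard_eq_one.1 hD2card
    rw [ha]
    rw [ha] at hvD2
    rw [hvD2]
  -- every isolated vertex is adjacent to both u and v
  have hWadj : ∀ y ∈ W, (HCN n).Adj u y ∧ (HCN n).Adj v y := by
    intro y hy
    have hy1 : y ∉ F1 := fun h => hy.1 (Or.inl h)
    have hy2 : y ∉ F2 := fun h => hy.1 (Or.inr h)
    obtain ⟨t, ht1, ht2⟩ := hget F1 h1 y hy1
    obtain ⟨s, hs1, hs2⟩ := hget F2 h2 y hy2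
    have htv : t = v := by
      have := hy.2 t ht1
      have htD2 : t ∈ F2 \ F1 := ⟨this.resolve_left ht2, ht2⟩
      rwa [hD2, Set.mem_singleton_iff] at htD2
    have hsu : s = u := by
      have := hy.2 s hs1
      have hsD1 : s ∈ F1 \ F2 := ⟨this.resolve_right hs2, hs2⟩
      rwa [hD1, Set.mem_singleton_iff] at hsD1
    exact ⟨(hsu ▸ hs1).symm, (htv ▸ ht1).symm⟩
  -- all neighbours of an isolated vertex lie in A ∪ {u, v}
  have hNW : ∀ y ∈ W, ∀ t, (HCN n).Adj y t → t ∈ A ∪ {u, v} := by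
    intro y hy t hadj
    have := hy.2 t hadj
    rcases this with h' | h'
    · by_cases h2' : t ∈ F2
      · exact Or.inl ⟨h', h2'⟩
      · have : t ∈ F1 \ F2 := ⟨h', h2'⟩
        rw [hD1, Set.mem_singleton_iff] at this
        exact Or.inr (Or.inl this)
    · by_cases h1' : t ∈ F1
      · exact Or.inl ⟨h1', h'⟩
      · have : t ∈ F2 \ F1 := ⟨h', h1'⟩
        rw [hD2, Set.mem_singleton_iff] at this
        exact Or.inr (Or.inr this)
  -- u and v are not adjacent (triangle-free)
  have huvadj : ¬ (HCN n).Adj u v := fun h' => no_triangle hn0 hwu h' hwv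
  -- neighbours of u (resp. v) lie in A ∪ W
  have hNu : ∀ t, (HCN n).Adj u t → t ∈ A ∪ W := by
    intro t hadj
    by_cases ht : t ∈ F1 ∪ F2
    · rcases ht with h' | h'
      · by_cases h2' : t ∈ F2
        · exact Or.inl ⟨h', h2'⟩
        · have : t ∈ F1 \ F2 := ⟨h', h2'⟩
          rw [hD1, Set.mem_singleton_iff] at this
          exact absurd this hadj.ne'
      · by_cases h1' : t ∈ F1
        · exact Or.inl ⟨h1', h'⟩
        · have : t ∈ F2 \ F1 := ⟨h', h1'⟩
          rw [hD2, Set.mem_singleton_iff] at this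
          exact absurd (this ▸ hadj) huvadj
    · exact Or.inr (hisoW t ht u (Or.inl huD1) hadj)
  have hNv : ∀ t, (HCN n).Adj v t → t ∈ A ∪ W := by
    intro t hadj
    by_cases ht : t ∈ F1 ∪ F2
    · rcases ht with h' | h'
      · by_cases h2' : t ∈ F2
        · exact Or.inl ⟨h', h2'⟩
        · have : t ∈ F1 \ F2 := ⟨h', h2'⟩
          rw [hD1, Set.mem_singleton_iff] at this
          exact absurd (this ▸ hadj.symm) huvadj
      · by_cases h1' : t ∈ F1
        · exact Or.inl ⟨h1', h'⟩
        · have : t ∈ F2 \ F1 := ⟨h', h1'⟩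
          rw [hD2, Set.mem_singleton_iff] at this
          exact absurd this hadj.ne'
    · exact Or.inr (hisoW t ht v (Or.inr hvD2) hadj)
  -- W is contained in the common neighbourhood of u and v
  have hWsub : W ⊆ (HCN n).neighborSet u ∩ (HCN n).neighborSet v := by
    intro y hy
    obtain ⟨hu', hv'⟩ := hWadj y hy
    exact ⟨hu', hv'⟩
  have hWcard : W.ncard ≤ 2 :=
    (Set.ncard_le_ncard hWsub (Set.toFinite _)).trans (common_le_two hn0 huv)
  have hWpos : 1 ≤ W.ncard := by
    rw [Nat.one_le_iff_ne_zero]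
    intro h'
    rw [(Set.ncard_eq_zero (Set.toFinite _)).1 h'] at hwW
    exact hwW
  -- abbreviations
  set Nu : Set (HVert n) := (HCN n).neighborSet u with hNudef
  set Nv : Set (HVert n) := (HCN n).neighborSet v with hNvdef
  set Au : Set (HVert n) := Nu ∩ A with hAudef
  set Av : Set (HVert n) := Nv ∩ A with hAvdef
  have hWA : ∀ y ∈ W, y ∉ A := fun y hy h' => hy.1 (Or.inl h'.1)
  -- basic cardinalities
  have hNucard : Nu.ncard = n + 1 := ncard_neighborSet hn0 u
  have hNvcard : Nv.ncard = n + 1 := ncard_neighborSet hn0 v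
  have hNusub : Nu ⊆ Au ∪ (Nu ∩ W) := by
    intro t ht
    rcases hNu t ht with h' | h'
    · exact Or.inl ⟨ht, h'⟩
    · exact Or.inr ⟨ht, h'⟩
  have hNvsub : Nv ⊆ Av ∪ (Nv ∩ W) := by
    intro t ht
    rcases hNv t ht with h' | h'
    · exact Or.inl ⟨ht, h'⟩
    · exact Or.inr ⟨ht, h'⟩
  have hAu_ge : n + 1 ≤ Au.ncard + W.ncard := by
    have hh1 := Set.ncard_le_ncard hNusub (Set.toFinite _)
    have hh2 := Set.ncard_union_le Au (Nu ∩ W)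
    have hh3 : (Nu ∩ W).ncard ≤ W.ncard :=
      Set.ncard_le_ncard Set.inter_subset_right (Set.toFinite _)
    omega
  have hAv_ge : n + 1 ≤ Av.ncard + W.ncard := by
    have hh1 := Set.ncard_le_ncard hNvsub (Set.toFinite _)
    have hh2 := Set.ncard_union_le Av (Nv ∩ W)
    have hh3 : (Nv ∩ W).ncard ≤ W.ncard :=
      Set.ncard_le_ncard Set.inter_subset_right (Set.toFinite _)
    omega
  -- the A-neighbourhood of any isolated vertex has at least n - 1 elements
  have hAy_ge : ∀ y ∈ W, n + 1 ≤ ((HCN n).neighborSet y ∩ A).ncard + 2 := by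
    intro y hy
    have hsub' : (HCN n).neighborSet y \ {u, v} ⊆ (HCN n).neighborSet y ∩ A := by
      rintro t ⟨ht1, ht2⟩
      rcases hNW y hy t ht1 with h' | h'
      · exact ⟨ht1, h'⟩
      · exact absurd h' ht2
    have hh1 := Set.ncard_le_ncard_diff_add_ncard ((HCN n).neighborSet y) ({u, v} : Set (HVert n)) (Set.toFinite _)
    have hh2 : (({u, v} : Set (HVert n))).ncard = 2 := Set.ncard_pair huv
    have hh3 := Set.ncard_le_ncard hsub' (Set.toFinite _)
    have hh4 : ((HCN n).neighborSet y).ncard = n + 1 := ncard_neighborSet hn0 y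
    omega
  -- disjointness from triangles
  have hdisjWu : ∀ y ∈ W, Disjoint ((HCN n).neighborSet y ∩ A) Au := by
    intro y hy
    rw [Set.disjoint_left]
    rintro t ⟨ht1, _⟩ ⟨ht2, _⟩
    exact no_triangle hn0 (hWadj y hy).1.symm ht2 ht1
  have hdisjWv : ∀ y ∈ W, Disjoint ((HCN n).neighborSet y ∩ A) Av := by
    intro y hy
    rw [Set.disjoint_left]
    rintro t ⟨ht1, _⟩ ⟨ht2, _⟩
    exact no_triangle hn0 (hWadj y hy).2.symm ht2 ht1
  -- intersection of Au and Av is controlled by |W|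
  have hAuAv : (Au ∩ Av).ncard + W.ncard ≤ 2 := by
    have hsub' : (Au ∩ Av) ∪ W ⊆ Nu ∩ Nv := by
      rintro t (⟨⟨h1', _⟩, ⟨h2', _⟩⟩ | hW')
      · exact ⟨h1', h2'⟩
      · exact hWsub hW'
    have hdisj' : Disjoint (Au ∩ Av) W := by
      rw [Set.disjoint_left]
      rintro t ⟨⟨_, htA⟩, _⟩ htW
      exact hWA t htW htA
    have hh1 := Set.ncard_le_ncard hsub' (Set.toFinite _)
    rw [Set.ncard_union_eq hdisj' (Set.toFinite _) (Set.toFinite _)] at hh1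
    exact hh1.trans (common_le_two hn0 huv)
  -- now split on the size of W
  have hWcases : W.ncard = 1 ∨ W.ncard = 2 := by omega
  set Aw : Set (HVert n) := (HCN n).neighborSet w ∩ A with hAwdef
  have hAw_ge : n + 1 ≤ Aw.ncard + 2 := hAy_ge w hwW
  have hsubA : Aw ∪ (Au ∪ Av) ⊆ A := by
    rintro t (⟨_, h'⟩ | ⟨_, h'⟩ | ⟨_, h'⟩) <;> exact h'
  rcases hWcases with hW1 | hW2
  · -- |W| = 1 : W = {w}
    have hAuAv1 : (Au ∩ Av).ncard ≤ 1 := by omega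
    have hhuv : (Au ∪ Av).ncard + (Au ∩ Av).ncard = Au.ncard + Av.ncard :=
      Set.ncard_union_add_ncard_inter Au Av (Set.toFinite _) (Set.toFinite _)
    have hdisj2 : Disjoint Aw (Au ∪ Av) := by
      rw [Set.disjoint_union_right]
      exact ⟨hdisjWu w hwW, hdisjWv w hwW⟩
    have htot : Aw.ncard + (Au ∪ Av).ncard ≤ A.ncard := by
      rw [← Set.ncard_union_eq hdisj2 (Set.toFinite _) (Set.toFinite _)]
      exact Set.ncard_le_ncard hsubA (Set.toFinite _)
    omega
  · -- |W| = 2 : W = {w, z}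
    obtain ⟨a, b, hab, hWeq⟩ := Set.ncard_eq_two.1 hW2
    have hwab : w = a ∨ w = b := by
      have := hwW
      rw [hWeq] at this
      exact this
    obtain ⟨z, hzW, hzw⟩ : ∃ z, z ∈ W ∧ z ≠ w := by
      rcases hwab with rfl | rfl
      · exact ⟨b, by rw [hWeq]; exact Or.inr rfl, fun h' => hab h'.symm⟩
      · exact ⟨a, by rw [hWeq]; exact Or.inl rfl, hab⟩
    set Az : Set (HVert n) := (HCN n).neighborSet z ∩ A with hAzdef
    have hAz_ge : n + 1 ≤ Az.ncard + 2 := hAy_ge z hzW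
    -- Aw and Az are disjoint since u, v already are two common neighbours of w and z
    have hdisjwz : Disjoint Aw Az := by
      have hsub' : (Aw ∩ Az) ∪ {u, v} ⊆ (HCN n).neighborSet w ∩ (HCN n).neighborSet z := by
        rintro t (⟨⟨h1', _⟩, ⟨h2', _⟩⟩ | ht)
        · exact ⟨h1', h2'⟩
        · rcases ht with rfl | rfl
          · exact ⟨hwu, ((hWadj z hzW).1).symm⟩
          · exact ⟨hwv, ((hWadj z hzW).2).symm⟩
      have hdisj' : Disjoint (Aw ∩ Az) ({u, v} : Set (HVert n)) := by
        rw [Set.disjoint_left]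
        rintro t ⟨⟨_, htA⟩, _⟩ ht
        rcases ht with rfl | rfl
        · exact huA htA
        · exact hvA htA
      have hh1 := Set.ncard_le_ncard hsub' (Set.toFinite _)
      rw [Set.ncard_union_eq hdisj' (Set.toFinite _) (Set.toFinite _), Set.ncard_pair huv] at hh1
      have hh2 := common_le_two hn0 (show w ≠ z from fun h' => hzw h'.symm)
      have hh3 : (Aw ∩ Az).ncard = 0 := by omega
      rw [Set.ncard_eq_zero (Set.toFinite _)] at hh3
      exact Set.disjoint_iff_inter_eq_empty.2 hh3
    have hdisjuv : Disjoint Au Av := by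
      have hh3 : (Au ∩ Av).ncard = 0 := by omega
      rw [Set.ncard_eq_zero (Set.toFinite _)] at hh3
      exact Set.disjoint_iff_inter_eq_empty.2 hh3
    -- total count
    have hd1 : Disjoint (Aw ∪ Az) (Au ∪ Av) := by
      rw [Set.disjoint_union_left, Set.disjoint_union_right, Set.disjoint_union_right]
      exact ⟨⟨hdisjWu w hwW, hdisjWv w hwW⟩, ⟨hdisjWu z hzW, hdisjWv z hzW⟩⟩
    have hsubA2 : (Aw ∪ Az) ∪ (Au ∪ Av) ⊆ A := by
      rintro t ((⟨_, h'⟩ | ⟨_, h'⟩) | (⟨_, h'⟩ | ⟨_, h'⟩)) <;> exact h'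
    have htot : (Aw.ncard + Az.ncard) + (Au.ncard + Av.ncard) ≤ A.ncard := by
      have e1 : (Aw ∪ Az).ncard = Aw.ncard + Az.ncard :=
        Set.ncard_union_eq hdisjwz (Set.toFinite _) (Set.toFinite _)
      have e2 : (Au ∪ Av).ncard = Au.ncard + Av.ncard :=
        Set.ncard_union_eq hdisjuv (Set.toFinite _) (Set.toFinite _)
      have e3 : ((Aw ∪ Az) ∪ (Au ∪ Av)).ncard = (Aw ∪ Az).ncard + (Au ∪ Av).ncard :=
        Set.ncard_union_eq hd1 (Set.toFinite _) (Set.toFinite _)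
      have e4 := Set.ncard_le_ncard hsubA2 (Set.toFinite _)
      omega
    omega

end Main
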